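/- Assume |α| < 1, |β| < 1 and d < 1. Then the alternating partial sums converge: as k → ∞, Σ_{j=0}^{k} (−1)^j·G(2j) tends to ( G 0 + b²·G₋₂ − c·(d² + a·d − b)/(d² + 1) ) / (a² + (b+1)²), and Σ_{j=0}^{k} (−1)^j·G(2j+1) tends to ( G 1 + b²·G₋₁ − c·d·(d² + a·d − b)/(d² + 1) ) / (a² + (b+1)²). -/

import Mathlib

theorem stmt_7 (a b c d : ℝ) (ha : 0 < a) (hb : 0 < b) (hc : 0 ≤ c) (hd : 0 ≤ d)
    (hden : d^2 - a*d - b ≠ 0)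
    (α β : ℝ)
    (hα : α = (a + Real.sqrt (a^2 + 4*b)) / 2)
    (hβ : β = (a - Real.sqrt (a^2 + 4*b)) / 2)
    (hαlt : |α| < 1) (hβlt : |β| < 1) (hdlt : d < 1)
    (G : ℕ → ℝ)
    (hG : ∀ n : ℕ, 2 ≤ n → G n = a * G (n-1) + b * G (n-2) + c * d^n)
    (Gm1 Gm2 : ℝ)
    (hGm1 : Gm1 = (G 1 - a * G 0 - c*d) / b)
    (hGm2 : Gm2 = ((a^2 + b) * G 0 - a * G 1 + c * (a*d - b)) / b^2) :
    Filter.Tendsto (fun k : ℕ => ∑ j ∈ Finset.range (k+1), (-1:ℝ)^j * G (2*j))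
        Filter.atTop
        (nhds ((G 0 + b^2 * Gm2 - c * (d^2 + a*d - b) / (d^2 + 1)) / (a^2 + (b+1)^2)))
    ∧ Filter.Tendsto (fun k : ℕ => ∑ j ∈ Finset.range (k+1), (-1:ℝ)^j * G (2*j+1))
        Filter.atTop
        (nhds ((G 1 + b^2 * Gm1 - c * d * (d^2 + a*d - b) / (d^2 + 1)) / (a^2 + (b+1)^2))) := by
  have h4b : (0:ℝ) < a^2 + 4*b := by nlinarith
  set s := Real.sqrt (a^2 + 4*b) with hs
  have hs2 : s^2 = a^2 + 4*b := Real.sq_sqrt h4b.le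
  have hspos : 0 < s := Real.sqrt_pos.mpr h4b
  have hsum : α + β = a := by rw [hα, hβ]; ring
  have hprod : α * β = -b := by rw [hα, hβ]; linear_combination (-1/4) * hs2
  have hαβ : α - β ≠ 0 := by
    have : α - β = s := by rw [hα, hβ]; ring
    rw [this]; exact ne_of_gt hspos
  have hα2 : α^2 = a*α + b := by linear_combination α*hsum - hprod
  have hβ2 : β^2 = a*β + b := by linear_combination β*hsum - hprod
  obtain ⟨E, hE⟩ : ∃ E : ℝ, E = c*d^2/(d^2 - a*d - b) := ⟨_, rfl⟩
  have hE2 : E*(d^2 - a*d - b) = c*d^2 := by rw [hE]; exact div_mul_cancel₀ _ hden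
  obtain ⟨g0, hg0⟩ : ∃ x : ℝ, x = G 0 - E := ⟨_, rfl⟩
  obtain ⟨g1, hg1⟩ : ∃ x : ℝ, x = G 1 - E*d := ⟨_, rfl⟩
  obtain ⟨A, hA⟩ : ∃ x : ℝ, x = (g1 - β*g0)/(α - β) := ⟨_, rfl⟩
  obtain ⟨B, hB⟩ : ∃ x : ℝ, x = (α*g0 - g1)/(α - β) := ⟨_, rfl⟩
  have hA' : A*(α - β) = g1 - β*g0 := by rw [hA]; field_simp
  have hB' : B*(α - β) = α*g0 - g1 := by rw [hB]; field_simp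
  have hAB0 : A + B = g0 := by
    apply mul_right_cancel₀ hαβ
    linear_combination hA' + hB'
  have hAB1 : A*α + B*β = g1 := by
    apply mul_right_cancel₀ hαβ
    linear_combination α*hA' + β*hB'
  -- closed form
  have key : ∀ n, G n = A*α^n + B*β^n + E*d^n := by
    intro n
    induction n using Nat.twoStepInduction with
    | zero =>
      simp only [pow_zero]
      linear_combination -hAB0 - hg0
    | one =>
      simp only [pow_one]
      linear_combination -hAB1 - hg1
    | more m ih1 ih2 =>
      have h := hG (m+2) (by omega)
      simp only [show m+2-1 = m+1 from rfl, show m+2-2 = m from rfl] at h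
      rw [h, ih1, ih2]
      linear_combination -(A*α^m*hα2) - B*β^m*hβ2 - d^m*hE2
  have habs : ∀ x:ℝ, |x| < 1 → |(-(x^2))| < 1 := by
    intro x hx
    rw [abs_neg, abs_pow]
    exact pow_lt_one₀ (abs_nonneg x) hx two_ne_zero
  have hd1 : |d| < 1 := abs_lt.mpr ⟨by linarith, hdlt⟩
  have hSα := hasSum_geometric_of_abs_lt_one (habs α hαlt)
  have hSβ := hasSum_geometric_of_abs_lt_one (habs β hβlt)
  have hSd := hasSum_geometric_of_abs_lt_one (habs d hd1)
  -- denominators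
  have h1α : (0:ℝ) < 1 + α^2 := by positivity
  have h1β : (0:ℝ) < 1 + β^2 := by positivity
  have h1d : (0:ℝ) < 1 + d^2 := by positivity
  have hDenpos : (0:ℝ) < a^2 + (b+1)^2 := by positivity
  have hDen : (1+α^2) * (1+β^2) = a^2 + (b+1)^2 := by
    linear_combination (α+β+a)*hsum + (α*β - b - 2)*hprod
  have hnum_even : A*(1+β^2) + B*(1+α^2) = (1+a^2+b)*g0 - a*g1 := by
    apply mul_right_cancel₀ hαβ
    linear_combination (1+β^2)*hA' + (1+α^2)*hB' +
      ((α-β)*(g0*(α+β+a) - g1))*hsum - ((α-β)*g0)*hprod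
  have hnum_odd : A*α*(1+β^2) + B*β*(1+α^2) = (1+b)*g1 - a*b*g0 := by
    apply mul_right_cancel₀ hαβ
    linear_combination (α*(1+β^2))*hA' + (β*(1+α^2))*hB' +
      ((α-β)*g0*α*β)*hsum + ((α-β)*(a*g0 - g1))*hprod
  have e2 : ∀ x:ℝ, (1:ℝ) - -(x^2) = 1 + x^2 := fun x => by ring
  constructor
  · -- even case
    have hfin : A * (1 - -(α^2))⁻¹ + B * (1 - -(β^2))⁻¹ + E * (1 - -(d^2))⁻¹
        = (G 0 + b^2 * Gm2 - c * (d^2 + a*d - b) / (d^2 + 1)) / (a^2 + (b+1)^2) := by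
      rw [e2, e2, e2]
      have e1 : A*(1+α^2)⁻¹ + B*(1+β^2)⁻¹ = ((1+a^2+b)*g0 - a*g1)/(a^2+(b+1)^2) := by
        rw [← hnum_even, ← hDen]
        field_simp
      rw [e1, hGm2, hg0, hg1, hE]
      field_simp [show d*(d-a) - b ≠ 0 by rw [show d*(d-a) - b = d^2 - a*d - b by ring]; exact hden]
      ring
    have hT := ((hSα.mul_left A).add ((hSβ.mul_left B).add (hSd.mul_left E))).tendsto_sum_nat.comp
      (Filter.tendsto_add_atTop_nat 1)
    have heq : ∀ k : ℕ, ((fun n => ∑ j ∈ Finset.range n,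
          (A * (-(α^2))^j + (B * (-(β^2))^j + E * (-(d^2))^j))) ∘ (fun k => k+1)) k
        = ∑ j ∈ Finset.range (k+1), (-1:ℝ)^j * G (2*j) := by
      intro k
      refine Finset.sum_congr rfl fun j _ => ?_
      rw [key (2*j), pow_mul, pow_mul, pow_mul, neg_pow, neg_pow, neg_pow]
      ring
    have hv : A * (1 - -(α^2))⁻¹ + (B * (1 - -(β^2))⁻¹ + E * (1 - -(d^2))⁻¹)
        = (G 0 + b^2 * Gm2 - c * (d^2 + a*d - b) / (d^2 + 1)) / (a^2 + (b+1)^2) := by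
      rw [← hfin]; ring
    rw [← hv]
    exact hT.congr heq
  · -- odd case
    have hfin : A*α * (1 - -(α^2))⁻¹ + B*β * (1 - -(β^2))⁻¹ + E*d * (1 - -(d^2))⁻¹
        = (G 1 + b^2 * Gm1 - c * d * (d^2 + a*d - b) / (d^2 + 1)) / (a^2 + (b+1)^2) := by
      rw [e2, e2, e2]
      have e1 : A*α*(1+α^2)⁻¹ + B*β*(1+β^2)⁻¹ = ((1+b)*g1 - a*b*g0)/(a^2+(b+1)^2) := by
        rw [← hnum_odd, ← hDen]
        field_simp
      rw [e1, hGm1, hg0, hg1, hE]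
      field_simp [show d*(d-a) - b ≠ 0 by rw [show d*(d-a) - b = d^2 - a*d - b by ring]; exact hden]
      ring
    have hT := ((hSα.mul_left (A*α)).add ((hSβ.mul_left (B*β)).add (hSd.mul_left (E*d)))).tendsto_sum_nat.comp
      (Filter.tendsto_add_atTop_nat 1)
    have heq : ∀ k : ℕ, ((fun n => ∑ j ∈ Finset.range n,
          (A*α * (-(α^2))^j + (B*β * (-(β^2))^j + E*d * (-(d^2))^j))) ∘ (fun k => k+1)) k
        = ∑ j ∈ Finset.range (k+1), (-1:ℝ)^j * G (2*j+1) := by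
      intro k
      refine Finset.sum_congr rfl fun j _ => ?_
      rw [key (2*j+1), pow_succ α (2*j), pow_succ β (2*j), pow_succ d (2*j),
        pow_mul α 2 j, pow_mul β 2 j, pow_mul d 2 j, neg_pow, neg_pow, neg_pow]
      ring
    have hv : A*α * (1 - -(α^2))⁻¹ + (B*β * (1 - -(β^2))⁻¹ + E*d * (1 - -(d^2))⁻¹)
        = (G 1 + b^2 * Gm1 - c * d * (d^2 + a*d - b) / (d^2 + 1)) / (a^2 + (b+1)^2) := by
      rw [← hfin]; ring
    rw [← hv]
    exact hT.congr heq
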